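/- For every integer m ≥ 0, Σ_{l=0}^m binom(m,l)·2^l·!(m−l) = Σ_{l=0}^m m!/l!. -/

import Mathlib

open Finset
open scoped Classical

/-- `λ^i(γ) = (−1)^{v_i} · ∏_{j ≠ i} (γ_j − a^i_j)` for a product two-action game. -/
def lamP {m : ℕ} (v : Fin m → ℕ) (a : Fin m → Fin m → ℝ) (i : Fin m) (γ : Fin m → ℝ) : ℝ :=
  (-1 : ℝ) ^ (v i) * ∏ j ∈ Finset.univ.erase i, (γ j - a i j)

/-- `γ ∈ [0,1]^m`. -/
def InCube {m : ℕ} (γ : Fin m → ℝ) : Prop := ∀ i, 0 ≤ γ i ∧ γ i ≤ 1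

/-- Equilibrium candidate: `λ^i(γ) = 0` for every `i` with `0 < γ_i < 1`. -/
def IsEqCand {m : ℕ} (v : Fin m → ℕ) (a : Fin m → Fin m → ℝ) (γ : Fin m → ℝ) : Prop :=
  InCube γ ∧ ∀ i, 0 < γ i → γ i < 1 → lamP v a i γ = 0

/-- Nash equilibrium of the product two-action game. -/
def IsNashP {m : ℕ} (v : Fin m → ℕ) (a : Fin m → Fin m → ℝ) (γ : Fin m → ℝ) : Prop :=
  IsEqCand v a γ ∧ (∀ i, γ i = 0 → lamP v a i γ ≤ 0) ∧ (∀ i, γ i = 1 → 0 ≤ lamP v a i γ)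

/-- The coefficient conditions of a product two-action game:
`a^i_j ∈ (0,1)` and `a^{i₁}_j ≠ a^{i₂}_j` for distinct `i₁, i₂ ≠ j`. -/
def GoodCoef {m : ℕ} (a : Fin m → Fin m → ℝ) : Prop :=
  (∀ i j : Fin m, i ≠ j → 0 < a i j ∧ a i j < 1) ∧
  (∀ j i₁ i₂ : Fin m, i₁ ≠ j → i₂ ≠ j → i₁ ≠ i₂ → a i₁ j ≠ a i₂ j)

/-- `EC(π)`. -/
def ECset {m : ℕ} (a : Fin m → Fin m → ℝ) (π : Equiv.Perm (Fin m)) : Set (Fin m → ℝ) :=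
  {γ | InCube γ ∧ (∀ i, π i = i → (γ i = 0 ∨ γ i = 1)) ∧ (∀ j, π j ≠ j → γ j = a (π j) j)}

/-- `|F(π)|`, the number of fixed points of `π`. -/
def fixedCard {m : ℕ} (π : Equiv.Perm (Fin m)) : ℕ :=
  (Finset.univ.filter fun i => π i = i).card

/-- `V(m) = Σ_{l=0}^m binom(m,l)·2^l·!(m−l)`. -/
def Vnum (m : ℕ) : ℕ :=
  ∑ l ∈ Finset.range (m + 1), Nat.choose m l * 2 ^ l * numDerangements (m - l)

/-- `σj` is the `j`-th associated permutation: it fixes `j` and sorts the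
`a^i_j` (`i ≠ j`) decreasingly. -/
def IsAssoc {m : ℕ} (a : Fin m → Fin m → ℝ) (j : Fin m) (σj : Equiv.Perm (Fin m)) : Prop :=
  σj j = j ∧ ∀ i₁ i₂ : Fin m, i₁ ≠ j → i₂ ≠ j → i₁ ≠ i₂ → (σj i₁ < σj i₂ ↔ a i₂ j < a i₁ j)

/-- The increment `Inc(γ,i)` of an equilibrium candidate `γ ∈ EC(π)` at `i ∈ F(π)`. -/
noncomputable def IncMap {m : ℕ} (v : Fin m → ℕ) (σ : Fin m → Equiv.Perm (Fin m))
    (π : Equiv.Perm (Fin m)) (γ : Fin m → ℝ) (i : Fin m) : ℕ :=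
  (1 + (if γ i = 1 then 1 else 0) + v i
    + (Finset.univ.filter fun k => π k = k ∧ k ≠ i ∧ γ k = 0).card
    + ∑ j ∈ Finset.univ.filter (fun j => π j ≠ j),
        (if (σ j) i ≤ (σ j) (π j) then 1 else 0)) % 2

/-- `g(π)`: the equilibrium candidate in `EC(π)` with `γ_i = 1` for all `i ∈ F(π)`. -/
noncomputable def gP {m : ℕ} (a : Fin m → Fin m → ℝ) (π : Equiv.Perm (Fin m)) : Fin m → ℝ :=
  fun j => if π j = j then 1 else a (π j) j

/-- A product two-action game is maximal if for every permutation `π` with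
`F(π) ≠ ∅` exactly `2^{|F(π)|−1}` elements of `EC(π)` are Nash equilibria. -/
def IsMaximal {m : ℕ} (v : Fin m → ℕ) (a : Fin m → Fin m → ℝ) : Prop :=
  ∀ π : Equiv.Perm (Fin m), (∃ i, π i = i) →
    {γ ∈ ECset a π | IsNashP v a γ}.ncard = 2 ^ (fixedCard π - 1)

/-- `χ(a,b) = 1` iff `a ≥ b` (on naturals). -/
def chiN (x y : ℕ) : ℕ := if y ≤ x then 1 else 0

/-- The permutation `δ^i` of `{1,…,m}`. -/
def deltaFun (m i j : ℕ) : ℕ :=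
  if j = i then i
  else if j < i then m - i + j + chiN (m - i + j) i
  else j - i + chiN (j - i) i

lemma tri_swap (m : ℕ) (f : ℕ → ℕ → ℤ) :
    ∑ l ∈ range (m+1), ∑ k ∈ range (m+1-l), f l k
      = ∑ r ∈ range (m+1), ∑ l ∈ range (r+1), f l (r-l) := by
  have h1 : ∀ l, l ∈ range (m+1) → ∑ k ∈ range (m+1-l), f l k
      = ∑ r ∈ range (m+1), if l ≤ r then f l (r-l) else 0 := by
    intro l hl
    rw [← Finset.sum_filter]
    have : (range (m+1)).filter (fun r => l ≤ r) = Finset.Ico l (m+1) := by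
      ext x; simp [Nat.lt_succ_iff]; omega
    rw [this, Finset.sum_Ico_eq_sum_range]
    simp
  rw [Finset.sum_congr rfl h1, Finset.sum_comm]
  refine Finset.sum_congr rfl fun r hr => ?_
  rw [← Finset.sum_filter]
  congr 1
  ext x; simp at hr ⊢; omega

lemma der_eq (n : ℕ) : (numDerangements n : ℤ) =
    ∑ k ∈ range (n+1), (-1:ℤ)^k * (n.choose k * (n-k).factorial : ℕ) := by
  rw [numDerangements_sum]
  refine Finset.sum_congr rfl fun k hk => ?_
  have hk' : k ≤ n := Nat.lt_succ_iff.mp (mem_range.mp hk)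
  congr 1
  norm_cast
  rw [Nat.ascFactorial_eq_factorial_mul_choose, Nat.add_sub_cancel' hk', Nat.choose_symm hk',
    Nat.mul_comm]


/-- `Σ_{l=0}^m binom(m,l)·2^l·!(m−l) = Σ_{l=0}^m m!/l!`. -/
theorem stmt2 (m : ℕ) :
    Vnum m = ∑ l ∈ Finset.range (m + 1), Nat.factorial m / Nat.factorial l := by
  have key : (Vnum m : ℤ) = ∑ r ∈ range (m+1), (m.choose r * (m-r).factorial : ℕ) := by
    have h0 : (Vnum m : ℤ) = ∑ l ∈ range (m+1), ∑ k ∈ range (m+1-l),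
        ((m.choose l : ℤ) * 2^l * ((-1:ℤ)^k * ((m-l).choose k * (m-l-k).factorial : ℕ))) := by
      rw [Vnum]
      push_cast
      refine Finset.sum_congr rfl fun l hl => ?_
      have : m + 1 - l = (m - l) + 1 := by simp at hl; omega
      rw [this, der_eq (m - l), Finset.mul_sum]
      push_cast
      ring
    rw [h0, tri_swap]
    push_cast
    refine Finset.sum_congr rfl fun r hr => ?_
    have hrm : r ≤ m := Nat.lt_succ_iff.mp (mem_range.mp hr)
    have expand : (m.choose r : ℤ) * ((m-r).factorial : ℤ)
        = (m.choose r : ℤ) * ((m-r).factorial : ℤ) * ((2 : ℤ) + (-1))^r := by norm_num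
    rw [expand, add_pow, Finset.mul_sum]
    refine Finset.sum_congr rfl fun l hl => ?_
    have hlr : l ≤ r := Nat.lt_succ_iff.mp (mem_range.mp hl)
    have hsub : m - l - (r - l) = m - r := by omega
    have hc : ((m.choose r : ℤ) * r.choose l) = (m.choose l : ℤ) * (m-l).choose (r-l) := by
      exact_mod_cast Nat.choose_mul hlr
    rw [hsub]
    linear_combination (-(((-1:ℤ))^(r-l) * 2^l * ((m-r).factorial : ℤ))) * hc
  have keyN : Vnum m = ∑ r ∈ range (m+1), m.choose r * (m-r).factorial := by
    exact_mod_cast key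
  rw [keyN]
  refine Finset.sum_congr rfl fun r hr => ?_
  have hrm : r ≤ m := Nat.lt_succ_iff.mp (mem_range.mp hr)
  symm
  apply Nat.div_eq_of_eq_mul_left (Nat.factorial_pos r)
  rw [← Nat.choose_mul_factorial_mul_factorial hrm]
  ring
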